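/- Let E be a simple regular expression over an alphabet α. The deterministic automaton whose state type is Set (RegularExpression α), whose transition function sends a state S and a symbol a to ⋃_{q ∈ S} ∂ₐ(q), whose start state is {E}, and whose accepting states are the sets S containing some expression q with ε ∈ L(q), accepts exactly the language L(E). (This is the correctness of Antimirov's partial-derivative DFA, i.e., of the (D_A, B_B)-alternating automaton construction.) -/

import Mathlib

open scoped Classical

/-- The Antimirov partial derivative of a regular expression with respect to a symbol. -/
noncomputable def aderiv {α : Type*} (a : α) : RegularExpression α → Set (RegularExpression α)
  | .zero => ∅
  | .epsilon => ∅
  | .char b => if b = a then {1} else ∅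
  | .plus E₁ E₂ => aderiv a E₁ ∪ aderiv a E₂
  | .comp E₁ E₂ =>
      if [] ∈ E₁.matches' then ((· * E₂) '' aderiv a E₁) ∪ aderiv a E₂
      else (· * E₂) '' aderiv a E₁
  | .star E₁ => (· * E₁.star) '' aderiv a E₁

/-- Iterated Antimirov partial derivative with respect to a word. -/
noncomputable def aderivWord {α : Type*} : List α → RegularExpression α → Set (RegularExpression α)
  | [], E => {E}
  | a :: w, E => ⋃ F ∈ aderiv a E, aderivWord w F

/-- Left quotient of a language by a word. -/
def lquot {α : Type*} (w : List α) (L : Language α) : Language α := {v | w ++ v ∈ L}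

open scoped Computability in
lemma star_cons_mem {α : Type*} (l : Language α) (a : α) (v : List α) :
    a :: v ∈ l∗ ↔ ∃ x y, a :: x ∈ l ∧ y ∈ l∗ ∧ x ++ y = v := by
  constructor
  · intro h
    obtain ⟨S, hS, hmem⟩ := Language.mem_kstar_iff_exists_nonempty.1 h
    match S with
    | [] => simp at hS
    | s :: S' =>
      obtain ⟨hs, hsne⟩ := hmem s (by simp)
      match s, hsne with
      | b :: x, _ =>
        simp only [List.flatten_cons, List.cons_append, List.cons.injEq] at hS
        obtain ⟨rfl, hv⟩ := hS
        exact ⟨x, S'.flatten, hs,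
          Language.mem_kstar_iff_exists_nonempty.2 ⟨S', rfl, fun y hy => hmem y (by simp [hy])⟩,
          hv.symm⟩
  · rintro ⟨x, y, hx, hy, rfl⟩
    obtain ⟨S, rfl, hmem⟩ := Language.mem_kstar_iff_exists_nonempty.1 hy
    refine Language.mem_kstar_iff_exists_nonempty.2 ⟨(a :: x) :: S, by simp, ?_⟩
    intro z hz
    rcases List.mem_cons.1 hz with rfl | hz
    · exact ⟨hx, by simp⟩
    · exact hmem z hz

lemma aderiv_matches {α : Type*} (a : α) (E : RegularExpression α) (v : List α) :
    a :: v ∈ E.matches' ↔ ∃ q ∈ aderiv a E, v ∈ q.matches' := by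
  induction E generalizing v with
  | zero => simp [aderiv, RegularExpression.matches'_zero]
  | epsilon =>
    rw [show RegularExpression.epsilon.matches' = (1 : Language α) from rfl]
    simp only [aderiv, Set.mem_empty_iff_false, exists_prop]
    simp [Language.mem_one]
  | char b =>
    rw [RegularExpression.matches'_char]
    show a :: v = [b] ↔ _
    constructor
    · intro h
      injection h with h1 h2
      subst h1; subst h2
      refine ⟨1, ?_, ?_⟩
      · simp [aderiv]
      · rw [RegularExpression.matches'_epsilon]; exact rfl
    · rintro ⟨q, hq, hv⟩
      simp only [aderiv] at hq
      split_ifs at hq with hba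
      · subst hba
        simp only [Set.mem_singleton_iff] at hq
        subst hq
        rw [RegularExpression.matches'_epsilon, Language.mem_one] at hv
        rw [hv]
      · simp at hq
  | plus E₁ E₂ ih₁ ih₂ =>
    rw [show (E₁.plus E₂).matches' = E₁.matches' + E₂.matches' from rfl, Language.mem_add, ih₁,
      ih₂]
    constructor
    · rintro (⟨q, hq, hv⟩ | ⟨q, hq, hv⟩)
      · exact ⟨q, Set.mem_union_left _ hq, hv⟩
      · exact ⟨q, Set.mem_union_right _ hq, hv⟩
    · rintro ⟨q, hq, hv⟩
      simp only [aderiv, Set.mem_union] at hq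
      rcases hq with hq | hq
      · exact Or.inl ⟨q, hq, hv⟩
      · exact Or.inr ⟨q, hq, hv⟩
  | comp E₁ E₂ ih₁ ih₂ =>
    rw [show (E₁.comp E₂).matches' = E₁.matches' * E₂.matches' from rfl]
    constructor
    · intro h
      obtain ⟨x, hx, y, hy, hxy⟩ := Language.mem_mul.1 h
      match x, hxy with
      | [], hxy =>
        simp only [List.nil_append] at hxy; subst hxy
        obtain ⟨q, hq, hv⟩ := (ih₂ v).1 hy
        refine ⟨q, ?_, hv⟩
        simp only [aderiv, if_pos hx, Set.mem_union]
        exact Or.inr hq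
      | b :: x', hxy =>
        simp only [List.cons_append, List.cons.injEq] at hxy
        obtain ⟨rfl, rfl⟩ := hxy
        obtain ⟨q, hq, hx'⟩ := (ih₁ x').1 hx
        refine ⟨q * E₂, ?_, ?_⟩
        · simp only [aderiv]
          split_ifs with h1
          · exact Set.mem_union_left _ ⟨q, hq, rfl⟩
          · exact ⟨q, hq, rfl⟩
        · rw [RegularExpression.matches'_mul]
          exact Language.mem_mul.2 ⟨x', hx', y, hy, rfl⟩
    · rintro ⟨q, hq, hv⟩
      simp only [aderiv] at hq
      have himg : q ∈ (· * E₂) '' aderiv a E₁ → a :: v ∈ E₁.matches' * E₂.matches' := by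
        rintro ⟨q', hq', rfl⟩
        rw [RegularExpression.matches'_mul] at hv
        obtain ⟨x, hx, y, hy, rfl⟩ := Language.mem_mul.1 hv
        exact Language.mem_mul.2 ⟨a :: x, (ih₁ x).2 ⟨q', hq', hx⟩, y, hy, rfl⟩
      split_ifs at hq with h1
      · rcases hq with hq | hq
        · exact himg hq
        · exact Language.mem_mul.2 ⟨[], h1, a :: v, (ih₂ v).2 ⟨q, hq, hv⟩, rfl⟩
      · exact himg hq
  | star E₁ ih₁ =>
    rw [RegularExpression.matches'_star, star_cons_mem]
    constructor
    · rintro ⟨x, y, hx, hy, rfl⟩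
      obtain ⟨q, hq, hxq⟩ := (ih₁ x).1 hx
      refine ⟨q * E₁.star, ⟨q, hq, rfl⟩, ?_⟩
      rw [RegularExpression.matches'_mul, RegularExpression.matches'_star]
      exact Language.mem_mul.2 ⟨x, hxq, y, hy, rfl⟩
    · rintro ⟨q, hq, hv⟩
      simp only [aderiv] at hq
      obtain ⟨q', hq', rfl⟩ := hq
      rw [RegularExpression.matches'_mul, RegularExpression.matches'_star] at hv
      obtain ⟨x, hx, y, hy, rfl⟩ := Language.mem_mul.1 hv
      exact ⟨x, y, (ih₁ x).2 ⟨q', hq', hx⟩, hy, rfl⟩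

lemma aderivWord_matches {α : Type*} (w : List α) (E : RegularExpression α) (v : List α) :
    w ++ v ∈ E.matches' ↔ ∃ q ∈ aderivWord w E, v ∈ q.matches' := by
  induction w generalizing E with
  | nil => simp [aderivWord]
  | cons a w ih =>
    rw [List.cons_append, aderiv_matches]
    simp only [aderivWord, Set.mem_iUnion, exists_prop]
    constructor
    · rintro ⟨F, hF, hv⟩
      obtain ⟨q, hq, hvq⟩ := (ih F).1 hv
      exact ⟨q, ⟨F, hF, hq⟩, hvq⟩
    · rintro ⟨q, ⟨F, hF, hq⟩, hvq⟩
      exact ⟨F, hF, (ih F).2 ⟨q, hq, hvq⟩⟩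

/-- The Antimirov partial-derivative DFA. -/
noncomputable def antimirovDFA {α : Type*} (E : RegularExpression α) :
    DFA α (Set (RegularExpression α)) :=
  DFA.mk (fun S a => ⋃ q ∈ S, aderiv a q) ({E} : Set (RegularExpression α))
    {S : Set (RegularExpression α) | ∃ q ∈ S, [] ∈ q.matches'}

lemma evalFrom_eq {α : Type*} (E : RegularExpression α) (w : List α)
    (S : Set (RegularExpression α)) :
    (antimirovDFA E).evalFrom S w = ⋃ q ∈ S, aderivWord w q := by
  induction w generalizing S with
  | nil => simp [DFA.evalFrom, aderivWord]
  | cons a w ih =>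
    have hstep : (antimirovDFA E).evalFrom S (a :: w)
        = (antimirovDFA E).evalFrom ((antimirovDFA E).step S a) w := rfl
    rw [hstep, ih]
    show ⋃ q ∈ (⋃ p ∈ S, aderiv a p), aderivWord w q = ⋃ q ∈ S, aderivWord (a :: w) q
    ext x
    simp only [aderivWord, Set.mem_iUnion, exists_prop]
    constructor
    · rintro ⟨q, ⟨p, hp, hq⟩, hx⟩
      exact ⟨p, hp, q, hq, hx⟩
    · rintro ⟨p, hp, q, hq, hx⟩
      exact ⟨q, ⟨p, hp, hq⟩, hx⟩

theorem antimirov_dfa_correct {α : Type*} (E : RegularExpression α) :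
    (DFA.mk (fun S a => ⋃ q ∈ S, aderiv a q) ({E} : Set (RegularExpression α))
        {S : Set (RegularExpression α) | ∃ q ∈ S, [] ∈ q.matches'}).accepts = E.matches' := by
  show (antimirovDFA E).accepts = E.matches'
  ext w
  rw [DFA.mem_accepts]
  show (antimirovDFA E).evalFrom {E} w ∈ _ ↔ _
  rw [evalFrom_eq E w {E}]
  show (∃ q ∈ ⋃ p ∈ ({E} : Set (RegularExpression α)), aderivWord w p, [] ∈ q.matches') ↔ _
  simp only [Set.mem_singleton_iff, Set.iUnion_iUnion_eq_left]
  rw [← aderivWord_matches w E []]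
  simp
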